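/- For all 2×2 complex matrices A and B and all θ ∈ (0,π), φ ∈ ℝ, the Moyal star product on the qubit Q-function phase space admits the closed form Q_{AB}(θ,φ) = 2π·( Q_A·Q_B + ∂Q_A/∂θ · ∂Q_B/∂θ + (1/sin²θ)·∂Q_A/∂φ · ∂Q_B/∂φ ) + (2πi/sinθ)·( ∂Q_A/∂θ · ∂Q_B/∂φ − ∂Q_A/∂φ · ∂Q_B/∂θ ), where AB is the matrix product. -/

import Mathlib

open Matrix Complex Real MeasureTheory

noncomputable section

/-- The spin coherent state |θ,φ⟩ = cos(θ/2)|0⟩ + e^{iφ} sin(θ/2)|1⟩. -/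
def cohVec (θ φ : ℝ) : Fin 2 → ℂ :=
  ![((Real.cos (θ / 2) : ℝ) : ℂ),
    Complex.exp (Complex.I * (φ : ℂ)) * ((Real.sin (θ / 2) : ℝ) : ℂ)]

/-- The Husimi Q function of a 2×2 complex matrix. -/
def Qfun (A : Matrix (Fin 2) (Fin 2) ℂ) (θ φ : ℝ) : ℂ :=
  (1 / (2 * Real.pi) : ℂ) *
    ∑ k, ∑ l, (starRingEnd ℂ) (cohVec θ φ k) * A k l * cohVec θ φ l

/-- ∂Q_A/∂θ. -/
def Qθ (A : Matrix (Fin 2) (Fin 2) ℂ) (θ φ : ℝ) : ℂ :=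
  deriv (fun t => Qfun A t φ) θ

/-- ∂Q_A/∂φ. -/
def Qφ (A : Matrix (Fin 2) (Fin 2) ℂ) (θ φ : ℝ) : ℂ :=
  deriv (fun p => Qfun A θ p) φ

lemma Qfun_explicit (M : Matrix (Fin 2) (Fin 2) ℂ) (θ φ : ℝ) :
    Qfun M θ φ = (1 / (2 * Real.pi) : ℂ) *
    (((Real.cos (θ/2) : ℝ) : ℂ) * ((Real.cos (θ/2) : ℝ) : ℂ) * M 0 0
        + ((Real.cos (θ/2) : ℝ) : ℂ) * ((Real.sin (θ/2) : ℝ) : ℂ)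
            * Complex.exp (Complex.I * φ) * M 0 1
        + ((Real.cos (θ/2) : ℝ) : ℂ) * ((Real.sin (θ/2) : ℝ) : ℂ)
            * Complex.exp (-(Complex.I * φ)) * M 1 0
        + ((Real.sin (θ/2) : ℝ) : ℂ) * ((Real.sin (θ/2) : ℝ) : ℂ) * Complex.exp (Complex.I * φ)
            * Complex.exp (-(Complex.I * φ)) * M 1 1) := by
  have hconj : (starRingEnd ℂ) (Complex.exp (Complex.I * φ))
      = Complex.exp (-(Complex.I * φ)) := by
    rw [← Complex.exp_conj]
    congr 1
    simp [Complex.conj_I]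
  simp only [Qfun, cohVec, Fin.sum_univ_two, Matrix.cons_val_zero, Matrix.cons_val_one,
    Matrix.head_cons, _root_.map_mul, Complex.conj_ofReal, hconj]
  ring

lemma Qθ_explicit (M : Matrix (Fin 2) (Fin 2) ℂ) (θ φ : ℝ) :
    Qθ M θ φ = (1 / (2 * Real.pi) : ℂ) *
    (-(((Real.cos (θ/2) : ℝ) : ℂ) * ((Real.sin (θ/2) : ℝ) : ℂ)) * M 0 0
        + (((Real.cos (θ/2) : ℝ) : ℂ)^2 - ((Real.sin (θ/2) : ℝ) : ℂ)^2)/2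
            * Complex.exp (Complex.I * φ) * M 0 1
        + (((Real.cos (θ/2) : ℝ) : ℂ)^2 - ((Real.sin (θ/2) : ℝ) : ℂ)^2)/2
            * Complex.exp (-(Complex.I * φ)) * M 1 0
        + ((Real.cos (θ/2) : ℝ) : ℂ) * ((Real.sin (θ/2) : ℝ) : ℂ)
            * Complex.exp (Complex.I * φ) * Complex.exp (-(Complex.I * φ)) * M 1 1) := by
  have hc : HasDerivAt (fun t : ℝ => ((Real.cos (t/2) : ℝ) : ℂ))
    ((-Real.sin (θ/2) * (1/2) : ℝ) : ℂ) θ :=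
    by have h := ((Real.hasDerivAt_cos (θ/2)).comp θ ((hasDerivAt_id θ).div_const 2)).ofReal_comp; exact h
  have hs : HasDerivAt (fun t : ℝ => ((Real.sin (t/2) : ℝ) : ℂ))
    ((Real.cos (θ/2) * (1/2) : ℝ) : ℂ) θ :=
    by have h := ((Real.hasDerivAt_sin (θ/2)).comp θ ((hasDerivAt_id θ).div_const 2)).ofReal_comp; exact h
  have H0 := (((((hc.mul hc).mul_const (M 0 0)).add
    (((hc.mul hs).mul_const (Complex.exp (Complex.I * φ))).mul_const (M 0 1))).add
    (((hc.mul hs).mul_const (Complex.exp (-(Complex.I * φ)))).mul_const (M 1 0))).add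
    ((((hs.mul hs).mul_const (Complex.exp (Complex.I * φ))).mul_const
        (Complex.exp (-(Complex.I * φ)))).mul_const (M 1 1))).const_mul
    ((1 / (2 * Real.pi) : ℂ))
  rw [Qθ]
  simp only [Qfun_explicit]
  refine H0.deriv.trans ?_
  push_cast
  ring

lemma Qφ_explicit (M : Matrix (Fin 2) (Fin 2) ℂ) (θ φ : ℝ) :
    Qφ M θ φ = (1 / (2 * Real.pi) : ℂ) *
    (Complex.I * (((Real.cos (θ/2) : ℝ) : ℂ) * ((Real.sin (θ/2) : ℝ) : ℂ))
          * Complex.exp (Complex.I * φ) * M 0 1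
        - Complex.I * (((Real.cos (θ/2) : ℝ) : ℂ) * ((Real.sin (θ/2) : ℝ) : ℂ))
          * Complex.exp (-(Complex.I * φ)) * M 1 0) := by
  have hE : HasDerivAt (fun p : ℝ => Complex.exp (Complex.I * p))
    (Complex.exp (Complex.I * φ) * Complex.I) φ := by
    have h0 : HasDerivAt (fun p : ℝ => (Complex.I * (p:ℂ))) Complex.I φ := by
      simpa using (Complex.ofRealCLM.hasDerivAt (x := φ)).const_mul Complex.I
    exact h0.cexp
  have hEb : HasDerivAt (fun p : ℝ => Complex.exp (-(Complex.I * p)))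
    (Complex.exp (-(Complex.I * φ)) * (-Complex.I)) φ := by
    have h0 : HasDerivAt (fun p : ℝ => (-(Complex.I * (p:ℂ)))) (-Complex.I) φ := by
      have h := ((Complex.ofRealCLM.hasDerivAt (x := φ)).const_mul Complex.I).neg
      simp at h
      exact h
    exact h0.cexp
  have H0 := ((((hasDerivAt_const φ (((Real.cos (θ/2) : ℝ) : ℂ) * ((Real.cos (θ/2) : ℝ) : ℂ) * M 0 0)).add
    ((hE.const_mul (((Real.cos (θ/2) : ℝ) : ℂ) * ((Real.sin (θ/2) : ℝ) : ℂ))).mul_const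
        (M 0 1))).add
    ((hEb.const_mul (((Real.cos (θ/2) : ℝ) : ℂ) * ((Real.sin (θ/2) : ℝ) : ℂ))).mul_const
        (M 1 0))).add
    (((hE.const_mul (((Real.sin (θ/2) : ℝ) : ℂ) * ((Real.sin (θ/2) : ℝ) : ℂ))).mul hEb).mul_const (M 1 1))).const_mul
    ((1 / (2 * Real.pi) : ℂ))
  rw [Qφ]
  simp only [Qfun_explicit]
  refine H0.deriv.trans ?_
  push_cast
  ring


/-- closed form of the Moyal star product on the qubit Q-function
phase space: Q_{AB} in terms of Q_A, Q_B and their first derivatives. -/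
theorem moyal_star_product_closed_form (A B : Matrix (Fin 2) (Fin 2) ℂ)
    (θ φ : ℝ) (hθ : θ ∈ Set.Ioo (0 : ℝ) Real.pi) :
    Qfun (A * B) θ φ =
      (2 * Real.pi : ℂ) *
        (Qfun A θ φ * Qfun B θ φ + Qθ A θ φ * Qθ B θ φ
          + ((1 / (Real.sin θ) ^ 2 : ℝ) : ℂ) * Qφ A θ φ * Qφ B θ φ)
      + (2 * Real.pi : ℂ) * Complex.I * ((1 / Real.sin θ : ℝ) : ℂ) *
          (Qθ A θ φ * Qφ B θ φ - Qφ A θ φ * Qθ B θ φ) := by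
  obtain ⟨h1, h2⟩ := hθ
  have hs0 : Real.sin θ ≠ 0 := ne_of_gt (Real.sin_pos_of_pos_of_lt_pi h1 h2)
  have hm : ∀ i j, (A * B) i j = A i 0 * B 0 j + A i 1 * B 1 j := by
    intro i j
    simp [Matrix.mul_apply, Fin.sum_univ_two]
  have hw2 : ((1 / (Real.sin θ) ^ 2 : ℝ) : ℂ) = ((1 / Real.sin θ : ℝ) : ℂ)^2 := by
    push_cast
    ring
  rw [Qfun_explicit (A * B), Qfun_explicit A, Qfun_explicit B, Qθ_explicit A, Qθ_explicit B,
    Qφ_explicit A, Qφ_explicit B, hw2, hm, hm, hm, hm]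
  set c : ℂ := ((Real.cos (θ/2) : ℝ) : ℂ) with hc_def
  set s : ℂ := ((Real.sin (θ/2) : ℝ) : ℂ) with hs_def
  set E : ℂ := Complex.exp (Complex.I * φ) with hE_def
  set Eb : ℂ := Complex.exp (-(Complex.I * φ)) with hEb_def
  set u : ℂ := (1 / (2 * (Real.pi : ℂ))) with hu_def
  set w : ℂ := ((1 / Real.sin θ : ℝ) : ℂ) with hw_def
  have hπ : ((Real.pi : ℝ) : ℂ) ≠ 0 := Complex.ofReal_ne_zero.mpr Real.pi_ne_zero
  have hu : 2 * (Real.pi : ℂ) * u = 1 := by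
    rw [hu_def]
    field_simp
  have hpy : c^2 + s^2 = 1 := by
    rw [hc_def, hs_def]
    norm_cast
    exact Real.cos_sq_add_sin_sq (θ/2)
  have hE : E * Eb = 1 := by
    rw [hE_def, hEb_def, ← Complex.exp_add]
    simp
  have hsin : ((Real.sin θ : ℝ) : ℂ) = 2 * s * c := by
    have hr : Real.sin θ = 2 * Real.sin (θ/2) * Real.cos (θ/2) := by
      rw [show θ = 2*(θ/2) by ring, Real.sin_two_mul]
      norm_num
    rw [hr, hs_def, hc_def]
    push_cast
    ring
  have hwS : ((Real.sin θ : ℝ) : ℂ) * w = 1 := by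
    rw [hw_def, one_div, Complex.ofReal_inv]
    exact mul_inv_cancel₀ (Complex.ofReal_ne_zero.mpr hs0)
  have hw : 2 * c * s * w = 1 := by
    linear_combination hwS - w * hsin
  have hi : Complex.I^2 = -1 := Complex.I_sq
  linear_combination
    ((-1:ℂ) * A 1 1 * B 1 1 * s^4 * E^2 * Eb^2 * u + (-1:ℂ) * A 1 1 * B 1 1 * c^2 * s^2 * E^2 * Eb^2 * u + (-1/2:ℂ) * A 1 1 * B 1 0 * c * s^3 * E * Eb^2 * u + A 1 1 * B 1 0 * c^2 * s^2 * E * Eb^2 * Complex.I^2 * u * w + (-1/2:ℂ) * A 1 1 * B 1 0 * c^3 * s * E * Eb^2 * u + (-1/2:ℂ) * A 1 1 * B 0 1 * c * s^3 * E^2 * Eb * u + (-1:ℂ) * A 1 1 * B 0 1 * c^2 * s^2 * E^2 * Eb * Complex.I^2 * u * w + (-1/2:ℂ) * A 1 1 * B 0 1 * c^3 * s * E^2 * Eb * u + (-1/2:ℂ) * A 1 0 * B 1 1 * c * s^3 * E * Eb^2 * u + (-1:ℂ) * A 1 0 * B 1 1 * c^2 * s^2 * E * Eb^2 * Complex.I^2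 * u * w + (-1/2:ℂ) * A 1 0 * B 1 1 * c^3 * s * E * Eb^2 * u + (-1/4:ℂ) * A 1 0 * B 1 0 * s^4 * Eb^2 * u + (-1/2:ℂ) * A 1 0 * B 1 0 * c^2 * s^2 * Eb^2 * u + (-1:ℂ) * A 1 0 * B 1 0 * c^2 * s^2 * Eb^2 * Complex.I^2 * u * w^2 + (-1/4:ℂ) * A 1 0 * B 1 0 * c^4 * Eb^2 * u + (-1/4:ℂ) * A 1 0 * B 0 1 * s^4 * E * Eb * u + A 1 0 * B 0 1 * c * s^3 * E * Eb * Complex.I^2 * u * w + (-1/2:ℂ) * A 1 0 * B 0 1 * c^2 * s^2 * E * Eb * u + A 1 0 * B 0 1 * c^2 * s^2 * E * Eb * Complex.I^2 * u * w^2 + (-1:ℂ) * A 1 0 * B 0 1 * c^3 * s * E * Eb * Complex.I^2 * u * w + (-1/4:ℂ) * A 1 0 * B 0 1 * c^4 * E * Eb * u + (-1/2:ℂ) * A 1 0 * B 0 0 * c * s^3 * Eb * u + A 1 0 * B 0 0 * c^2 * s^2 * Eb * Complex.I^2 * u * w + (-1/2:ℂ) * A 1 0 * B 0 0 * c^3 *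 s * Eb * u + (-1/2:ℂ) * A 0 1 * B 1 1 * c * s^3 * E^2 * Eb * u + A 0 1 * B 1 1 * c^2 * s^2 * E^2 * Eb * Complex.I^2 * u * w + (-1/2:ℂ) * A 0 1 * B 1 1 * c^3 * s * E^2 * Eb * u + (-1/4:ℂ) * A 0 1 * B 1 0 * s^4 * E * Eb * u + (-1:ℂ) * A 0 1 * B 1 0 * c * s^3 * E * Eb * Complex.I^2 * u * w + (-1/2:ℂ) * A 0 1 * B 1 0 * c^2 * s^2 * E * Eb * u + A 0 1 * B 1 0 * c^2 * s^2 * E * Eb * Complex.I^2 * u * w^2 + A 0 1 * B 1 0 * c^3 * s * E * Eb * Complex.I^2 * u * w + (-1/4:ℂ) * A 0 1 * B 1 0 * c^4 * E * Eb * u + (-1/4:ℂ) * A 0 1 * B 0 1 * s^4 * E^2 * u + (-1/2:ℂ) * A 0 1 * B 0 1 * c^2 * s^2 * E^2 * u + (-1:ℂ) * A 0 1 * B 0 1 * c^2 * s^2 * E^2 * Complex.I^2 * u * w^2 + (-1/4:ℂ) * A 0 1 * B 0 1 * c^4 * E^2 * u + (-1/2:ℂ) * A 0 1 * B 0 0 *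 c * s^3 * E * u + (-1:ℂ) * A 0 1 * B 0 0 * c^2 * s^2 * E * Complex.I^2 * u * w + (-1/2:ℂ) * A 0 1 * B 0 0 * c^3 * s * E * u + (-1/2:ℂ) * A 0 0 * B 1 0 * c * s^3 * Eb * u + (-1:ℂ) * A 0 0 * B 1 0 * c^2 * s^2 * Eb * Complex.I^2 * u * w + (-1/2:ℂ) * A 0 0 * B 1 0 * c^3 * s * Eb * u + (-1/2:ℂ) * A 0 0 * B 0 1 * c * s^3 * E * u + A 0 0 * B 0 1 * c^2 * s^2 * E * Complex.I^2 * u * w + (-1/2:ℂ) * A 0 0 * B 0 1 * c^3 * s * E * u + (-1:ℂ) * A 0 0 * B 0 0 * c^2 * s^2 * u + (-1:ℂ) * A 0 0 * B 0 0 * c^4 * u) * hu +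
    ((1/2:ℂ) * A 1 1 * B 1 0 * c * s * E * Eb^2 * Complex.I^2 * u + (-1/2:ℂ) * A 1 1 * B 0 1 * c * s * E^2 * Eb * Complex.I^2 * u + (-1/2:ℂ) * A 1 0 * B 1 1 * c * s * E * Eb^2 * Complex.I^2 * u + (-1/4:ℂ) * A 1 0 * B 1 0 * Eb^2 * Complex.I^2 * u + (-1/2:ℂ) * A 1 0 * B 1 0 * c * s * Eb^2 * Complex.I^2 * u * w + (1/4:ℂ) * A 1 0 * B 0 1 * E * Eb * Complex.I^2 * u + (1/2:ℂ) * A 1 0 * B 0 1 * s^2 * E * Eb * Complex.I^2 * u + (1/2:ℂ) * A 1 0 * B 0 1 * c * s * E * Eb * Complex.I^2 * u * w + (-1/2:ℂ) * A 1 0 * B 0 1 * c^2 * E * Eb * Complex.I^2 * u + (1/2:ℂ) * A 1 0 * B 0 0 * c * s * Eb * Complex.I^2 * u + (1/2:ℂ) * A 0 1 * B 1 1 * c * s * E^2 * Eb * Complex.I^2 * u + (1/4:ℂ) * A 0 1 * B 1 0 * E * Eb * Complex.I^2 * u + (-1/2:ℂ) * A 0 1 * B 1 0 * s^2 * E * Eb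 * Complex.I^2 * u + (1/2:ℂ) * A 0 1 * B 1 0 * c * s * E * Eb * Complex.I^2 * u * w + (1/2:ℂ) * A 0 1 * B 1 0 * c^2 * E * Eb * Complex.I^2 * u + (-1/4:ℂ) * A 0 1 * B 0 1 * E^2 * Complex.I^2 * u + (-1/2:ℂ) * A 0 1 * B 0 1 * c * s * E^2 * Complex.I^2 * u * w + (-1/2:ℂ) * A 0 1 * B 0 0 * c * s * E * Complex.I^2 * u + (-1/2:ℂ) * A 0 0 * B 1 0 * c * s * Eb * Complex.I^2 * u + (1/2:ℂ) * A 0 0 * B 0 1 * c * s * E * Complex.I^2 * u) * hw +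
    ((1/2:ℂ) * A 1 1 * B 1 0 * c * s * E * Eb^2 * u + (-1/2:ℂ) * A 1 1 * B 0 1 * c * s * E^2 * Eb * u + (-1/2:ℂ) * A 1 0 * B 1 1 * c * s * E * Eb^2 * u + (-1/4:ℂ) * A 1 0 * B 1 0 * Eb^2 * u + (1/4:ℂ) * A 1 0 * B 0 1 * E * Eb * u + (1/2:ℂ) * A 1 0 * B 0 1 * s^2 * E * Eb * u + (-1/2:ℂ) * A 1 0 * B 0 1 * c^2 * E * Eb * u + (1/2:ℂ) * A 1 0 * B 0 0 * c * s * Eb * u + (1/2:ℂ) * A 0 1 * B 1 1 * c * s * E^2 * Eb * u + (1/4:ℂ) * A 0 1 * B 1 0 * E * Eb * u + (-1/2:ℂ) * A 0 1 * B 1 0 * s^2 * E * Eb * u + (1/2:ℂ) * A 0 1 * B 1 0 * c^2 * E * Eb * u + (-1/4:ℂ) * A 0 1 * B 0 1 * E^2 * u + (-1/2:ℂ) * A 0 1 * B 0 0 * c * s * E * u + (-1/2:ℂ) * A 0 0 * B 1 0 * c * s * Eb * u + (1/2:ℂ) * A 0 0 * B 0 1 * c * s * E * u) * hi +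
    (A 1 1 * B 1 1 * s^2 * u + (-1:ℂ) * A 1 1 * B 1 1 * s^4 * u + (-1:ℂ) * A 1 1 * B 1 1 * s^4 * E * Eb * u + (-1:ℂ) * A 1 1 * B 1 1 * c^2 * s^2 * u + (-1:ℂ) * A 1 1 * B 1 1 * c^2 * s^2 * E * Eb * u + (-1/2:ℂ) * A 1 1 * B 1 0 * c * s * Eb * u + (-1/2:ℂ) * A 1 1 * B 1 0 * c * s^3 * Eb * u + (-1/2:ℂ) * A 1 1 * B 1 0 * c^3 * s * Eb * u + (1/2:ℂ) * A 1 1 * B 0 1 * c * s * E * u + (-1/2:ℂ) * A 1 1 * B 0 1 * c * s^3 * E * u + (-1/2:ℂ) * A 1 1 * B 0 1 * c^3 * s * E * u + (1/2:ℂ) * A 1 0 * B 1 1 * c * s * Eb * u + (-1/2:ℂ) * A 1 0 * B 1 1 * c * s^3 * Eb * u + (-1/2:ℂ) * A 1 0 * B 1 1 * c^3 * s * Eb * u + (-1/4:ℂ) * A 1 0 * B 0 1 * u + (1/2:ℂ) * A 1 0 * B 0 1 * s^2 * u + (-1/4:ℂ) * A 1 0 * B 0 1 * s^4 * u + (1/2:ℂ)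 * A 1 0 * B 0 1 * c^2 * u + (-1/2:ℂ) * A 1 0 * B 0 1 * c^2 * s^2 * u + (-1/4:ℂ) * A 1 0 * B 0 1 * c^4 * u + (-1/2:ℂ) * A 0 1 * B 1 1 * c * s * E * u + (-1/2:ℂ) * A 0 1 * B 1 1 * c * s^3 * E * u + (-1/2:ℂ) * A 0 1 * B 1 1 * c^3 * s * E * u + (-1/4:ℂ) * A 0 1 * B 1 0 * u + (1/2:ℂ) * A 0 1 * B 1 0 * s^2 * u + (-1/4:ℂ) * A 0 1 * B 1 0 * s^4 * u + (-1/2:ℂ) * A 0 1 * B 1 0 * c^2 * u + (-1/2:ℂ) * A 0 1 * B 1 0 * c^2 * s^2 * u + (-1/4:ℂ) * A 0 1 * B 1 0 * c^4 * u) * hE +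
    ((-1:ℂ) * A 1 1 * B 1 1 * s^2 * u + (-1/2:ℂ) * A 1 1 * B 1 0 * c * s * Eb * u + (-1/2:ℂ) * A 1 1 * B 0 1 * c * s * E * u + (-1/2:ℂ) * A 1 0 * B 1 1 * c * s * Eb * u + (-1/4:ℂ) * A 1 0 * B 1 0 * Eb^2 * u + (-1/4:ℂ) * A 1 0 * B 1 0 * s^2 * Eb^2 * u + (-1/4:ℂ) * A 1 0 * B 1 0 * c^2 * Eb^2 * u + (1/4:ℂ) * A 1 0 * B 0 1 * u + (-1/4:ℂ) * A 1 0 * B 0 1 * s^2 * u + (-1/4:ℂ) * A 1 0 * B 0 1 * c^2 * u + (-1/2:ℂ) * A 1 0 * B 0 0 * c * s * Eb * u + (-1/2:ℂ) * A 0 1 * B 1 1 * c * s * E * u + (1/4:ℂ) * A 0 1 * B 1 0 * u + (-1/4:ℂ) * A 0 1 * B 1 0 * s^2 * u + (-1/4:ℂ) * A 0 1 * B 1 0 * c^2 * u + (-1/4:ℂ) * A 0 1 * B 0 1 * E^2 * u + (-1/4:ℂ) * A 0 1 * B 0 1 * s^2 * E^2 * u + (-1/4:ℂ) * A 0 1 *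 B 0 1 * c^2 * E^2 * u + (-1/2:ℂ) * A 0 1 * B 0 0 * c * s * E * u + (-1/2:ℂ) * A 0 0 * B 1 0 * c * s * Eb * u + (-1/2:ℂ) * A 0 0 * B 0 1 * c * s * E * u + (-1:ℂ) * A 0 0 * B 0 0 * c^2 * u) * hpy
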